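/- For every n ≥ 1 and α ∈ ℕ, the recurrence relation x^θ·P_n^{(α)}(x) = P_{n+θ}^{(α)}(x) + Σ_{j=n−1}^{n+θ−1} κ_{n,j}^{(α)}·P_j^{(α)}(x) holds, where κ_{n,j}^{(α)} := ⟨P_n^{(α)}, x·Q_j^{(α)}⟩_θ^α · (H_j^{(α)})^{−1}. -/

import Mathlib

open MeasureTheory Polynomial Matrix Filter

/-- Evaluation of a matrix polynomial at a real scalar. -/
noncomputable def mpEval {p : ℕ} (f : Polynomial (Matrix (Fin p) (Fin p) ℝ)) (x : ℝ) :
    Matrix (Fin p) (Fin p) ℝ :=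
  f.sum fun k a => x ^ k • a

/-- The adjacent matrix-valued θ-deformed bilinear form
`⟨f, g⟩_θ^α = ∫ f(x) · x^α · W(x) · g(x^θ)ᵀ dx`, computed entrywise. -/
noncomputable def bform {p : ℕ} (θ : ℕ) (W : ℝ → Matrix (Fin p) (Fin p) ℝ) (α : ℕ)
    (f g : Polynomial (Matrix (Fin p) (Fin p) ℝ)) : Matrix (Fin p) (Fin p) ℝ :=
  Matrix.of fun i j => ∫ x : ℝ, (mpEval f x * (x ^ α • W x) * (mpEval g (x ^ θ))ᵀ) i j

/-- A matrix polynomial is monic of degree `n`: the `x^n` coefficient is `I_p`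
and all higher coefficients vanish. -/
def MonicDeg {p : ℕ} (f : Polynomial (Matrix (Fin p) (Fin p) ℝ)) (n : ℕ) : Prop :=
  f.coeff n = 1 ∧ ∀ k : ℕ, n < k → f.coeff k = 0

/-- The k-th moment `m_k = ∫ x^k W(x) dx`, computed entrywise. -/
noncomputable def mom {p : ℕ} (W : ℝ → Matrix (Fin p) (Fin p) ℝ) (k : ℕ) :
    Matrix (Fin p) (Fin p) ℝ :=
  Matrix.of fun i j => ∫ x : ℝ, x ^ k * W x i j

/-- The block moment matrix `M_n^{(α)} = (m_{α+i+jθ})_{i,j=0}^{n-1}`, as an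
`n × n` matrix over the ring of `p × p` real matrices. -/
noncomputable def momMat {p : ℕ} (θ : ℕ) (W : ℝ → Matrix (Fin p) (Fin p) ℝ) (n α : ℕ) :
    Matrix (Fin n) (Fin n) (Matrix (Fin p) (Fin p) ℝ) :=
  Matrix.of fun i j => mom W (α + (i : ℕ) + (j : ℕ) * θ)

variable {p : ℕ} {θ : ℕ} {W : ℝ → Matrix (Fin p) (Fin p) ℝ}

lemma mpEval_eq_sum (f : Polynomial (Matrix (Fin p) (Fin p) ℝ)) (N : ℕ)
    (hf : ∀ k, N ≤ k → f.coeff k = 0) (x : ℝ) :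
    mpEval f x = ∑ k ∈ Finset.range N, x ^ k • f.coeff k := by
  rw [mpEval, Polynomial.sum_def]
  refine Finset.sum_subset ?_ ?_
  · intro k hk
    simp only [Finset.mem_range]
    by_contra h
    exact (Polynomial.mem_support_iff.mp hk) (hf k (le_of_not_gt h))
  · intro k _ hk
    rw [Polynomial.notMem_support_iff.mp hk, smul_zero]

lemma entry_expand (m : ℕ) (A B : Matrix (Fin p) (Fin p) ℝ) (i j : Fin p) (x : ℝ) :
    x ^ m * (A * W x * Bᵀ) i j
      = ∑ b : Fin p, ∑ a : Fin p, (A i a * B j b) * (x ^ m * W x a b) := by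
  simp only [Matrix.mul_apply, Matrix.transpose_apply, Finset.sum_mul, Finset.mul_sum]
  exact Finset.sum_congr rfl fun b _ => Finset.sum_congr rfl fun a _ => by ring

lemma mom_entry_int (hWint : ∀ (k : ℕ) (i j : Fin p), Integrable fun x : ℝ => x ^ k * W x i j)
    (m : ℕ) (A B : Matrix (Fin p) (Fin p) ℝ) (i j : Fin p) :
    Integrable (fun x : ℝ => x ^ m * (A * W x * Bᵀ) i j) := by
  simp only [entry_expand]
  exact integrable_finset_sum _ fun b _ =>
    integrable_finset_sum _ fun a _ => (hWint m a b).const_mul _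

lemma mom_entry_val (hWint : ∀ (k : ℕ) (i j : Fin p), Integrable fun x : ℝ => x ^ k * W x i j)
    (m : ℕ) (A B : Matrix (Fin p) (Fin p) ℝ) (i j : Fin p) :
    ∫ x : ℝ, x ^ m * (A * W x * Bᵀ) i j = (A * mom W m * Bᵀ) i j := by
  simp only [entry_expand]
  rw [integral_finset_sum _
    (fun b _ => integrable_finset_sum _ fun a _ => (hWint m a b).const_mul _)]
  have h2 : ∀ b : Fin p, ∫ x : ℝ, ∑ a : Fin p, (A i a * B j b) * (x ^ m * W x a b)
      = ∑ a : Fin p, (A i a * B j b) * ∫ x : ℝ, x ^ m * W x a b := by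
    intro b
    rw [integral_finset_sum _ (fun a _ => (hWint m a b).const_mul _)]
    exact Finset.sum_congr rfl fun a _ => integral_const_mul _ _
  simp only [h2]
  simp only [Matrix.mul_apply, Matrix.transpose_apply, mom, Matrix.of_apply,
    Finset.mul_sum, Finset.sum_mul]
  exact Finset.sum_congr rfl fun b _ => Finset.sum_congr rfl fun a _ => by ring

lemma integrand_eq (α : ℕ) (N M : ℕ) (f g : Polynomial (Matrix (Fin p) (Fin p) ℝ))
    (hf : ∀ k, N ≤ k → f.coeff k = 0) (hg : ∀ l, M ≤ l → g.coeff l = 0) (x : ℝ) :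
    mpEval f x * (x ^ α • W x) * (mpEval g (x ^ θ))ᵀ
      = ∑ k ∈ Finset.range N, ∑ l ∈ Finset.range M,
          (x ^ (α + k + l * θ)) • (f.coeff k * W x * (g.coeff l)ᵀ) := by
  rw [mpEval_eq_sum f N hf, mpEval_eq_sum g M hg]
  rw [Matrix.transpose_sum]
  simp only [Matrix.transpose_smul, Finset.sum_mul, Finset.mul_sum,
    Matrix.smul_mul, Matrix.mul_smul, smul_smul]
  rw [Finset.sum_comm]
  refine Finset.sum_congr rfl fun k _ => Finset.sum_congr rfl fun l _ => ?_
  simp only [← pow_add]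
  congr 1
  ring

lemma bform_eq (hWint : ∀ (k : ℕ) (i j : Fin p), Integrable fun x : ℝ => x ^ k * W x i j)
    (α : ℕ) (N M : ℕ) (f g : Polynomial (Matrix (Fin p) (Fin p) ℝ))
    (hf : ∀ k, N ≤ k → f.coeff k = 0) (hg : ∀ l, M ≤ l → g.coeff l = 0) :
    bform θ W α f g = ∑ k ∈ Finset.range N, ∑ l ∈ Finset.range M,
        f.coeff k * mom W (α + k + l * θ) * (g.coeff l)ᵀ := by
  ext i j
  show (∫ x : ℝ, (mpEval f x * (x ^ α • W x) * (mpEval g (x ^ θ))ᵀ) i j) = _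
  have h1 : ∀ x : ℝ, (mpEval f x * (x ^ α • W x) * (mpEval g (x ^ θ))ᵀ) i j
      = ∑ k ∈ Finset.range N, ∑ l ∈ Finset.range M,
          x ^ (α + k + l * θ) * (f.coeff k * W x * (g.coeff l)ᵀ) i j := by
    intro x
    rw [integrand_eq α N M f g hf hg x]
    rw [Matrix.sum_apply]
    refine Finset.sum_congr rfl fun k _ => ?_
    rw [Matrix.sum_apply]
    refine Finset.sum_congr rfl fun l _ => ?_
    simp [Matrix.smul_apply]
  simp only [h1, Matrix.sum_apply]
  rw [integral_finset_sum _ (fun k _ => integrable_finset_sum _ fun l _ =>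
    mom_entry_int hWint _ _ _ i j)]
  refine Finset.sum_congr rfl fun k _ => ?_
  rw [integral_finset_sum _ (fun l _ => mom_entry_int hWint _ _ _ i j)]
  refine Finset.sum_congr rfl fun l _ => ?_
  rw [mom_entry_val hWint]

lemma bform_mono_right (hWint : ∀ (k : ℕ) (i j : Fin p), Integrable fun x : ℝ => x ^ k * W x i j)
    (α N : ℕ) (f : Polynomial (Matrix (Fin p) (Fin p) ℝ)) (hf : ∀ k, N ≤ k → f.coeff k = 0)
    (l : ℕ) :
    bform θ W α f (X ^ l) = ∑ k ∈ Finset.range N, f.coeff k * mom W (α + k + l * θ) := by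
  rw [bform_eq hWint α N (l+1) f (X ^ l) hf
    (fun m hm => by rw [Polynomial.coeff_X_pow]; exact if_neg (by omega))]
  refine Finset.sum_congr rfl fun k _ => ?_
  rw [Finset.sum_eq_single_of_mem l (Finset.self_mem_range_succ l)
    (fun m _ hm => by rw [Polynomial.coeff_X_pow, if_neg hm, Matrix.transpose_zero, mul_zero])]
  rw [Polynomial.coeff_X_pow, if_pos rfl, Matrix.transpose_one, mul_one]

lemma bform_mono_left (hWint : ∀ (k : ℕ) (i j : Fin p), Integrable fun x : ℝ => x ^ k * W x i j)
    (α M : ℕ) (g : Polynomial (Matrix (Fin p) (Fin p) ℝ)) (hg : ∀ l, M ≤ l → g.coeff l = 0)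
    (k : ℕ) :
    bform θ W α (X ^ k) g = ∑ l ∈ Finset.range M, mom W (α + k + l * θ) * (g.coeff l)ᵀ := by
  rw [bform_eq hWint α (k+1) M (X ^ k) g
    (fun m hm => by rw [Polynomial.coeff_X_pow]; exact if_neg (by omega)) hg]
  rw [Finset.sum_eq_single_of_mem k (Finset.self_mem_range_succ k)
    (fun m _ hm => by
      refine Finset.sum_eq_zero fun l _ => ?_
      rw [Polynomial.coeff_X_pow, if_neg hm, zero_mul, zero_mul])]
  refine Finset.sum_congr rfl fun l _ => ?_
  rw [Polynomial.coeff_X_pow, if_pos rfl, one_mul]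

lemma bform_right_expand (hWint : ∀ (k : ℕ) (i j : Fin p), Integrable fun x : ℝ => x ^ k * W x i j)
    (α M : ℕ) (g : Polynomial (Matrix (Fin p) (Fin p) ℝ)) (hg : ∀ l, M ≤ l → g.coeff l = 0)
    (f : Polynomial (Matrix (Fin p) (Fin p) ℝ)) :
    bform θ W α f g = ∑ l ∈ Finset.range M, bform θ W α f (X ^ l) * (g.coeff l)ᵀ := by
  have hf : ∀ k, f.natDegree + 1 ≤ k → f.coeff k = 0 :=
    fun k hk => Polynomial.coeff_eq_zero_of_natDegree_lt (by omega)
  rw [bform_eq hWint α (f.natDegree + 1) M f g hf hg, Finset.sum_comm]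
  refine Finset.sum_congr rfl fun l _ => ?_
  rw [bform_mono_right hWint α (f.natDegree + 1) f hf l, Finset.sum_mul]

lemma bform_left_expand (hWint : ∀ (k : ℕ) (i j : Fin p), Integrable fun x : ℝ => x ^ k * W x i j)
    (α N : ℕ) (f : Polynomial (Matrix (Fin p) (Fin p) ℝ)) (hf : ∀ k, N ≤ k → f.coeff k = 0)
    (g : Polynomial (Matrix (Fin p) (Fin p) ℝ)) :
    bform θ W α f g = ∑ k ∈ Finset.range N, f.coeff k * bform θ W α (X ^ k) g := by
  have hg : ∀ l, g.natDegree + 1 ≤ l → g.coeff l = 0 :=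
    fun l hl => Polynomial.coeff_eq_zero_of_natDegree_lt (by omega)
  rw [bform_eq hWint α N (g.natDegree + 1) f g hf hg]
  refine Finset.sum_congr rfl fun k _ => ?_
  rw [bform_mono_left hWint α (g.natDegree + 1) g hg k, Finset.mul_sum]
  exact Finset.sum_congr rfl fun l _ => by rw [mul_assoc]

lemma bform_sub_left (hWint : ∀ (k : ℕ) (i j : Fin p), Integrable fun x : ℝ => x ^ k * W x i j)
    (α : ℕ) (f₁ f₂ g : Polynomial (Matrix (Fin p) (Fin p) ℝ)) :
    bform θ W α (f₁ - f₂) g = bform θ W α f₁ g - bform θ W α f₂ g := by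
  set N := max f₁.natDegree f₂.natDegree + 1 with hN
  have h1 : ∀ k, N ≤ k → f₁.coeff k = 0 :=
    fun k hk => Polynomial.coeff_eq_zero_of_natDegree_lt (by omega)
  have h2 : ∀ k, N ≤ k → f₂.coeff k = 0 :=
    fun k hk => Polynomial.coeff_eq_zero_of_natDegree_lt (by omega)
  have hg : ∀ l, g.natDegree + 1 ≤ l → g.coeff l = 0 :=
    fun l hl => Polynomial.coeff_eq_zero_of_natDegree_lt (by omega)
  rw [bform_eq hWint α N (g.natDegree + 1) f₁ g h1 hg,
    bform_eq hWint α N (g.natDegree + 1) f₂ g h2 hg,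
    bform_eq hWint α N (g.natDegree + 1) (f₁ - f₂) g
      (fun k hk => by rw [Polynomial.coeff_sub, h1 k hk, h2 k hk, sub_zero]) hg,
    ← Finset.sum_sub_distrib]
  refine Finset.sum_congr rfl fun k _ => ?_
  rw [← Finset.sum_sub_distrib]
  refine Finset.sum_congr rfl fun l _ => ?_
  rw [Polynomial.coeff_sub, sub_mul, sub_mul]

lemma bform_Cmul_left (hWint : ∀ (k : ℕ) (i j : Fin p), Integrable fun x : ℝ => x ^ k * W x i j)
    (α : ℕ) (A : Matrix (Fin p) (Fin p) ℝ) (f g : Polynomial (Matrix (Fin p) (Fin p) ℝ)) :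
    bform θ W α (C A * f) g = A * bform θ W α f g := by
  have hf : ∀ k, f.natDegree + 1 ≤ k → f.coeff k = 0 :=
    fun k hk => Polynomial.coeff_eq_zero_of_natDegree_lt (by omega)
  have hg : ∀ l, g.natDegree + 1 ≤ l → g.coeff l = 0 :=
    fun l hl => Polynomial.coeff_eq_zero_of_natDegree_lt (by omega)
  rw [bform_eq hWint α (f.natDegree + 1) (g.natDegree + 1) f g hf hg,
    bform_eq hWint α (f.natDegree + 1) (g.natDegree + 1) (C A * f) g
      (fun k hk => by rw [Polynomial.coeff_C_mul, hf k hk, mul_zero]) hg,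
    Finset.mul_sum]
  refine Finset.sum_congr rfl fun k _ => ?_
  rw [Finset.mul_sum]
  refine Finset.sum_congr rfl fun l _ => ?_
  simp only [Polynomial.coeff_C_mul, mul_assoc]

lemma bform_zero_left (hWint : ∀ (k : ℕ) (i j : Fin p), Integrable fun x : ℝ => x ^ k * W x i j)
    (α : ℕ) (g : Polynomial (Matrix (Fin p) (Fin p) ℝ)) :
    bform θ W α (0 : Polynomial (Matrix (Fin p) (Fin p) ℝ)) g = 0 := by
  rw [bform_eq hWint α 0 (g.natDegree + 1) 0 g (fun k _ => Polynomial.coeff_zero k)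
    (fun l hl => Polynomial.coeff_eq_zero_of_natDegree_lt (by omega))]
  simp

lemma bform_add_left (hWint : ∀ (k : ℕ) (i j : Fin p), Integrable fun x : ℝ => x ^ k * W x i j)
    (α : ℕ) (f₁ f₂ g : Polynomial (Matrix (Fin p) (Fin p) ℝ)) :
    bform θ W α (f₁ + f₂) g = bform θ W α f₁ g + bform θ W α f₂ g := by
  set N := max f₁.natDegree f₂.natDegree + 1 with hN
  have h1 : ∀ k, N ≤ k → f₁.coeff k = 0 :=
    fun k hk => Polynomial.coeff_eq_zero_of_natDegree_lt (by omega)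
  have h2 : ∀ k, N ≤ k → f₂.coeff k = 0 :=
    fun k hk => Polynomial.coeff_eq_zero_of_natDegree_lt (by omega)
  have hg : ∀ l, g.natDegree + 1 ≤ l → g.coeff l = 0 :=
    fun l hl => Polynomial.coeff_eq_zero_of_natDegree_lt (by omega)
  rw [bform_eq hWint α N (g.natDegree + 1) f₁ g h1 hg,
    bform_eq hWint α N (g.natDegree + 1) f₂ g h2 hg,
    bform_eq hWint α N (g.natDegree + 1) (f₁ + f₂) g
      (fun k hk => by rw [Polynomial.coeff_add, h1 k hk, h2 k hk, add_zero]) hg,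
    ← Finset.sum_add_distrib]
  refine Finset.sum_congr rfl fun k _ => ?_
  rw [← Finset.sum_add_distrib]
  refine Finset.sum_congr rfl fun l _ => ?_
  rw [Polynomial.coeff_add, add_mul, add_mul]

lemma bform_sum_left (hWint : ∀ (k : ℕ) (i j : Fin p), Integrable fun x : ℝ => x ^ k * W x i j)
    (α : ℕ) (s : Finset ℕ) (f : ℕ → Polynomial (Matrix (Fin p) (Fin p) ℝ))
    (g : Polynomial (Matrix (Fin p) (Fin p) ℝ)) :
    bform θ W α (∑ j ∈ s, f j) g = ∑ j ∈ s, bform θ W α (f j) g := by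
  classical
  induction s using Finset.induction_on with
  | empty => simpa using bform_zero_left hWint α g
  | insert a s hns ih =>
    rw [Finset.sum_insert hns, Finset.sum_insert hns, bform_add_left hWint, ih]

lemma bform_shift (hWint : ∀ (k : ℕ) (i j : Fin p), Integrable fun x : ℝ => x ^ k * W x i j)
    (α : ℕ) (f g : Polynomial (Matrix (Fin p) (Fin p) ℝ)) :
    bform θ W α (X ^ θ * f) g = bform θ W α f (X * g) := by
  set N := f.natDegree + 1 with hNdef
  set M := g.natDegree + 1 with hMdef
  have hf : ∀ k, N ≤ k → f.coeff k = 0 :=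
    fun k hk => Polynomial.coeff_eq_zero_of_natDegree_lt (by omega)
  have hg : ∀ l, M ≤ l → g.coeff l = 0 :=
    fun l hl => Polynomial.coeff_eq_zero_of_natDegree_lt (by omega)
  have hXf : ∀ k, (X ^ θ * f).coeff k = if θ ≤ k then f.coeff (k - θ) else 0 := by
    intro k; rw [Polynomial.X_pow_mul, Polynomial.coeff_mul_X_pow']
  have hXg : ∀ l, (X * g).coeff l = if 1 ≤ l then g.coeff (l - 1) else 0 := by
    intro l; rw [Polynomial.X_mul, ← pow_one (X : Polynomial (Matrix (Fin p) (Fin p) ℝ)),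
      Polynomial.coeff_mul_X_pow']
  rw [bform_eq hWint α (θ + N) M (X ^ θ * f) g
      (fun k hk => by rw [hXf k, if_pos (by omega), hf (k - θ) (by omega)]) hg,
    bform_eq hWint α N (1 + M) f (X * g) hf
      (fun l hl => by
        rw [hXg l]
        rcases le_or_gt 1 l with h|h
        · rw [if_pos h, hg (l - 1) (by omega)]
        · rw [if_neg (by omega)]),
    Finset.sum_range_add]
  have hz : ∑ k ∈ Finset.range θ, ∑ l ∈ Finset.range M,
      (X ^ θ * f).coeff k * mom W (α + k + l * θ) * (g.coeff l)ᵀ = 0 := by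
    refine Finset.sum_eq_zero fun k hk => Finset.sum_eq_zero fun l _ => ?_
    rw [hXf k, if_neg (by simpa using Finset.mem_range.mp hk |>.not_ge), zero_mul, zero_mul]
  rw [hz, zero_add]
  refine Finset.sum_congr rfl fun k _ => ?_
  conv_rhs => rw [Finset.sum_range_add]
  have hz2 : ∑ l ∈ Finset.range 1, f.coeff k * mom W (α + k + l * θ) * ((X * g).coeff l)ᵀ = 0 := by
    refine Finset.sum_eq_zero fun l hl => ?_
    have hl0 : l = 0 := by have := Finset.mem_range.mp hl; omega
    rw [hl0, hXg 0, if_neg (by omega), Matrix.transpose_zero, mul_zero]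
  rw [hz2, zero_add]
  refine Finset.sum_congr rfl fun l _ => ?_
  rw [hXf (θ + k), if_pos (by omega), hXg (1 + l), if_pos (by omega),
    show θ + k - θ = k by omega, show 1 + l - 1 = l by omega,
    show α + (θ + k) + l * θ = α + k + (1 + l) * θ by ring]

/-- recurrence relation
`x^θ·P_n^{(α)} = P_{n+θ}^{(α)} + Σ_{j=n-1}^{n+θ-1} κ_{n,j}^{(α)}·P_j^{(α)}`,
with `κ_{n,j}^{(α)} = ⟨P_n^{(α)}, x·Q_j^{(α)}⟩_θ^α · (H_j^{(α)})⁻¹`. -/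
theorem statement5
    (p θ : ℕ) (hp : 1 ≤ p) (hθ : 1 ≤ θ)
    (W : ℝ → Matrix (Fin p) (Fin p) ℝ)
    (hWmeas : ∀ i j : Fin p, Measurable fun x : ℝ => W x i j)
    (hWint : ∀ (k : ℕ) (i j : Fin p), Integrable fun x : ℝ => x ^ k * W x i j)
    (hM : ∀ (n α : ℕ), 1 ≤ n → IsUnit (momMat θ W n α))
    (P Q : ℕ → ℕ → Polynomial (Matrix (Fin p) (Fin p) ℝ))
    (hPmonic : ∀ n α : ℕ, MonicDeg (P n α) n)
    (hPorth : ∀ n α : ℕ, ∀ i < n, bform θ W α (P n α) (X ^ i) = 0)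
    (hQmonic : ∀ n α : ℕ, MonicDeg (Q n α) n)
    (hQorth : ∀ n α : ℕ, ∀ i < n, bform θ W α (X ^ i) (Q n α) = 0)
    (H : ℕ → ℕ → Matrix (Fin p) (Fin p) ℝ)
    (hHdef : ∀ n α : ℕ, H n α = bform θ W α (P n α) (X ^ n))
    (hHunit : ∀ n α : ℕ, IsUnit (H n α)) :
    ∀ n : ℕ, 1 ≤ n → ∀ α : ℕ,
      (X : Polynomial (Matrix (Fin p) (Fin p) ℝ)) ^ θ * P n α
        = P (n + θ) α
          + ∑ j ∈ Finset.Icc (n - 1) (n + θ - 1),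
              C (bform θ W α (P n α) (X * Q j α) * Ring.inverse (H j α)) * P j α := by

  intro n hn α
  have hPdeg : ∀ m k : ℕ, m < k → (P m α).coeff k = 0 := fun m k h => (hPmonic m α).2 k h
  have hQdeg : ∀ m k : ℕ, m < k → (Q m α).coeff k = 0 := fun m k h => (hQmonic m α).2 k h
  have hPlow : ∀ (m : ℕ) (g : Polynomial (Matrix (Fin p) (Fin p) ℝ)),
      (∀ l, m ≤ l → g.coeff l = 0) → bform θ W α (P m α) g = 0 := by
    intro m g hg
    rw [bform_right_expand hWint α m g hg (P m α)]
    exact Finset.sum_eq_zero fun l hl => by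
      rw [hPorth m α l (Finset.mem_range.mp hl), zero_mul]
  have hQlow : ∀ (m : ℕ) (f : Polynomial (Matrix (Fin p) (Fin p) ℝ)),
      (∀ k, m ≤ k → f.coeff k = 0) → bform θ W α f (Q m α) = 0 := by
    intro m f hf
    rw [bform_left_expand hWint α m f hf (Q m α)]
    exact Finset.sum_eq_zero fun k hk => by
      rw [hQorth m α k (Finset.mem_range.mp hk), mul_zero]
  have hPQj : ∀ j : ℕ, bform θ W α (P j α) (Q j α) = H j α := by
    intro j
    rw [bform_right_expand hWint α (j+1) (Q j α) (fun l hl => hQdeg j l (by omega)) (P j α),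
      Finset.sum_range_succ,
      Finset.sum_eq_zero (fun l hl => by rw [hPorth j α l (Finset.mem_range.mp hl), zero_mul]),
      zero_add, (hQmonic j α).1, Matrix.transpose_one, mul_one, hHdef]
  have hXQ : ∀ j : ℕ, bform θ W α (X ^ j) (Q j α) = H j α := by
    intro j
    have e2 : bform θ W α (P j α) (Q j α) = bform θ W α (X ^ j) (Q j α) := by
      rw [bform_left_expand hWint α (j+1) (P j α) (fun k hk => hPdeg j k (by omega)) (Q j α),
        Finset.sum_range_succ,
        Finset.sum_eq_zero (fun k hk => by rw [hQorth j α k (Finset.mem_range.mp hk), mul_zero]),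
        zero_add, (hPmonic j α).1, one_mul]
    rw [← e2, hPQj j]
  have hPQne : ∀ i j : ℕ, i ≠ j → bform θ W α (P i α) (Q j α) = 0 := by
    intro i j hij
    rcases lt_or_gt_of_ne hij with h | h
    · exact hQlow j (P i α) (fun k hk => hPdeg i k (by omega))
    · exact hPlow i (Q j α) (fun l hl => hQdeg j l (by omega))
  have huniq : ∀ (m : ℕ) (F : Polynomial (Matrix (Fin p) (Fin p) ℝ)),
      (∀ k, m ≤ k → F.coeff k = 0) → (∀ j, j < m → bform θ W α F (Q j α) = 0) → F = 0 := by
    intro m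
    induction m with
    | zero =>
      intro F hd _
      exact Polynomial.ext fun k => by rw [hd k (Nat.zero_le k), Polynomial.coeff_zero]
    | succ m ih =>
      intro F hd ho
      have hm : F.coeff m = 0 := by
        have e := ho m (by omega)
        rw [bform_left_expand hWint α (m+1) F hd (Q m α), Finset.sum_range_succ,
          Finset.sum_eq_zero (fun k hk => by rw [hQorth m α k (Finset.mem_range.mp hk), mul_zero]),
          zero_add, hXQ m] at e
        exact (hHunit m α).mul_right_cancel (by rw [e, zero_mul])
      refine ih F (fun k hk => ?_) (fun j hj => ho j (by omega))
      rcases eq_or_lt_of_le hk with h | h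
      · rw [← h]; exact hm
      · exact hd k h
  set S : Polynomial (Matrix (Fin p) (Fin p) ℝ) :=
    ∑ j ∈ Finset.Icc (n-1) (n+θ-1),
      C (bform θ W α (P n α) (X * Q j α) * Ring.inverse (H j α)) * P j α with hS
  have hkey : X ^ θ * P n α - (P (n + θ) α + S) = 0 := by
    apply huniq (n + θ)
    · intro k hk
      rw [Polynomial.coeff_sub, Polynomial.coeff_add]
      have hScoeff : S.coeff k = 0 := by
        rw [hS, Polynomial.finset_sum_coeff]
        refine Finset.sum_eq_zero fun j hj => ?_
        have hj' := Finset.mem_Icc.mp hj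
        rw [Polynomial.coeff_C_mul, hPdeg j k (by omega), mul_zero]
      have hX : (X ^ θ * P n α).coeff k = (P n α).coeff (k - θ) := by
        rw [Polynomial.X_pow_mul, Polynomial.coeff_mul_X_pow', if_pos (by omega)]
      rcases eq_or_lt_of_le hk with h | h
      · rw [hX, hScoeff, ← h, show n + θ - θ = n by omega, (hPmonic n α).1,
          (hPmonic (n+θ) α).1]
        simp
      · rw [hX, hScoeff, hPdeg n (k - θ) (by omega), hPdeg (n+θ) k (by omega)]
        simp
    · intro j hj
      rw [bform_sub_left hWint, bform_add_left hWint, bform_shift hWint]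
      have hSb : bform θ W α S (Q j α)
          = ∑ j' ∈ Finset.Icc (n-1) (n+θ-1),
              bform θ W α (P n α) (X * Q j' α) * Ring.inverse (H j' α)
                * bform θ W α (P j' α) (Q j α) := by
        rw [hS, bform_sum_left hWint]
        exact Finset.sum_congr rfl fun j' _ => bform_Cmul_left hWint α _ _ _
      have hPn : bform θ W α (P (n + θ) α) (Q j α) = 0 := hPQne (n+θ) j (by omega)
      rcases le_or_gt (n-1) j with hcase | hcase
      · have hmem : j ∈ Finset.Icc (n-1) (n+θ-1) := Finset.mem_Icc.mpr ⟨hcase, by omega⟩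
        rw [hSb, Finset.sum_eq_single_of_mem j hmem
            (fun j' _ hne => by rw [hPQne j' j hne, mul_zero]),
          hPQj j, mul_assoc, Ring.inverse_mul_cancel _ (hHunit j α), mul_one,
          hPn]
        simp
      · have h1 : bform θ W α (P n α) (X * Q j α) = 0 := by
          apply hPlow n
          intro l hl
          rw [Polynomial.X_mul, ← pow_one (X : Polynomial (Matrix (Fin p) (Fin p) ℝ)),
            Polynomial.coeff_mul_X_pow', if_pos (by omega), hQdeg j (l-1) (by omega)]
        have h2 : bform θ W α S (Q j α) = 0 := by
          rw [hSb]
          refine Finset.sum_eq_zero fun j' hj' => ?_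
          have := Finset.mem_Icc.mp hj'
          rw [hPQne j' j (by omega), mul_zero]
        rw [h1, h2, hPn]
        simp
  exact sub_eq_zero.mp hkey
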